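/- Let F_n be the abstract Fibonacci polynomials in ℂ⟨x, x^{-1}, y⟩ extended to all integer indices. Then the noncommutative Cassini identity holds for all integers n: (-1)^n = F_{n-2}(x^{-1}, x^{-1}y) · x^{-1} · F_n(x,y) - F_{n-1}(x^{-1}, x^{-1}y) · F_{n-1}(x,y). -/

import Mathlib

/-- The noncommutative Cassini identity:
(-1)^n = F_{n-2}(x⁻¹,x⁻¹y)·x⁻¹·F_n(x,y) - F_{n-1}(x⁻¹,x⁻¹y)·F_{n-1}(x,y),
for all integers n. -/
theorem noncommutative_cassini {R : Type*} [Ring R] [Algebra ℂ R]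
    (x xi y : R) (hx : x * xi = 1) (hx' : xi * x = 1)
    (F G : ℤ → R)
    (hF0 : F 0 = 1) (hF1 : F 1 = y)
    (hFrec : ∀ n : ℤ, F (n + 2) = F n * x + F (n + 1) * y)
    (hG0 : G 0 = 1) (hG1 : G 1 = xi * y)
    (hGrec : ∀ n : ℤ, G (n + 2) = G n * xi + G (n + 1) * (xi * y)) :
    ∀ n : ℤ, (((-1) ^ n : ℤˣ) : R) = G (n - 2) * xi * F n - G (n - 1) * F (n - 1) := by
  -- cast lemma
  have hneg : ∀ m : ℤ, (((-1)^(m+1) : ℤˣ) : R) = -(((-1)^m : ℤˣ) : R) := by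
    intro m
    rw [zpow_add_one]
    push_cast
    rw [mul_neg_one]
  -- negative index values
  have hFm1 : F (-1) = 0 := by
    have h := hFrec (-1)
    norm_num [hF0, hF1] at h
    have : F (-1) * x * xi = 0 * xi := by rw [h]
    rwa [mul_assoc, hx, mul_one, zero_mul] at this
  have hGm1 : G (-1) = 0 := by
    have h := hGrec (-1)
    norm_num [hG0, hG1] at h
    have : G (-1) * xi * x = 0 * x := by rw [h]
    rwa [mul_assoc, hx', mul_one, zero_mul] at this
  have hGm2 : G (-2) = x := by
    have h := hGrec (-2)
    norm_num [hG0, hGm1] at h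
    have : G (-2) * xi * x = 1 * x := by rw [h]
    rwa [mul_assoc, hx', mul_one, one_mul] at this
  -- F also satisfies the left-handed recurrence
  have hL : ∀ n : ℤ, F (n + 2) = x * F n + y * F (n + 1) := by
    have stepF : ∀ m : ℤ, F (m + 2) = x * F m + y * F (m + 1) →
        F (m + 3) = x * F (m + 1) + y * F (m + 2) →
        F (m + 4) = x * F (m + 2) + y * F (m + 3) := by
      intro m h1 h2
      have e1 : x * F m = F (m + 2) - y * F (m + 1) := by
        rw [h1, add_sub_cancel_right]
      have e2 : x * F (m + 1) = F (m + 3) - y * F (m + 2) := by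
        rw [h2, add_sub_cancel_right]
      have r0 : F (m + 2) = F m * x + F (m + 1) * y := hFrec m
      have r1 : F (m + 3) = F (m + 1) * x + F (m + 2) * y := by
        have := hFrec (m + 1)
        rwa [show m + 1 + 2 = m + 3 by ring, show m + 1 + 1 = m + 2 by ring] at this
      have r2 : F (m + 4) = F (m + 2) * x + F (m + 3) * y := by
        have := hFrec (m + 2)
        rwa [show m + 2 + 2 = m + 4 by ring, show m + 2 + 1 = m + 3 by ring] at this
      have main : x * F (m + 2) + y * F (m + 3) = F (m + 2) * x + F (m + 3) * y :=
        calc x * F (m + 2) + y * F (m + 3)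
            = x * (F m * x + F (m + 1) * y) + y * (F (m + 1) * x + F (m + 2) * y) := by
              conv_lhs => rw [r0, r1]
          _ = (x * F m) * x + (x * F (m + 1)) * y
                + y * (F (m + 1) * x) + y * (F (m + 2) * y) := by noncomm_ring
          _ = (F (m + 2) - y * F (m + 1)) * x + (F (m + 3) - y * F (m + 2)) * y
                + y * (F (m + 1) * x) + y * (F (m + 2) * y) := by rw [e1, e2]
          _ = F (m + 2) * x + F (m + 3) * y := by noncomm_ring
      rw [r2, ← main]
    have stepB : ∀ m : ℤ, F (m + 3) = x * F (m + 1) + y * F (m + 2) →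
        F (m + 4) = x * F (m + 2) + y * F (m + 3) →
        F (m + 2) = x * F m + y * F (m + 1) := by
      intro m h1 h2
      have r0 : F (m + 2) = F m * x + F (m + 1) * y := hFrec m
      have r1 : F (m + 3) = F (m + 1) * x + F (m + 2) * y := by
        have := hFrec (m + 1)
        rwa [show m + 1 + 2 = m + 3 by ring, show m + 1 + 1 = m + 2 by ring] at this
      have r2 : F (m + 4) = F (m + 2) * x + F (m + 3) * y := by
        have := hFrec (m + 2)
        rwa [show m + 2 + 2 = m + 4 by ring, show m + 2 + 1 = m + 3 by ring] at this
      have eFmx : F m * x = F (m + 2) - F (m + 1) * y := by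
        rw [r0, add_sub_cancel_right]
      have eFm1x : F (m + 1) * x = F (m + 3) - F (m + 2) * y := by
        rw [r1, add_sub_cancel_right]
      have key : (x * F m + y * F (m + 1) - F (m + 2)) * x = 0 :=
        calc (x * F m + y * F (m + 1) - F (m + 2)) * x
            = x * (F m * x) + y * (F (m + 1) * x) - F (m + 2) * x := by noncomm_ring
          _ = x * (F (m + 2) - F (m + 1) * y) + y * (F (m + 3) - F (m + 2) * y)
                - F (m + 2) * x := by rw [eFmx, eFm1x]
          _ = (x * F (m + 2) + y * F (m + 3))
                - (x * (F (m + 1) * y) + y * (F (m + 2) * y) + F (m + 2) * x) := by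
              noncomm_ring
          _ = F (m + 4)
                - (x * (F (m + 1) * y) + y * (F (m + 2) * y) + F (m + 2) * x) := by rw [← h2]
          _ = (F (m + 2) * x + F (m + 3) * y)
                - (x * (F (m + 1) * y) + y * (F (m + 2) * y) + F (m + 2) * x) := by rw [r2]
          _ = (F (m + 3) - (x * F (m + 1) + y * F (m + 2))) * y := by noncomm_ring
          _ = 0 := by rw [h1, sub_self, zero_mul]
      have hz : x * F m + y * F (m + 1) - F (m + 2) = 0 := by
        have h3 : x * F m + y * F (m + 1) - F (m + 2)
            = (x * F m + y * F (m + 1) - F (m + 2)) * x * xi := by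
          rw [mul_assoc, hx, mul_one]
        rw [h3, key, zero_mul]
      exact (sub_eq_zero.mp hz).symm
    have pair : ∀ n : ℤ, F (n + 2) = x * F n + y * F (n + 1)
        ∧ F (n + 3) = x * F (n + 1) + y * F (n + 2) := by
      intro n
      induction n using Int.induction_on with
      | zero =>
          have b0 : F 2 = x * F 0 + y * F 1 := by
            have h := hFrec 0
            norm_num at h
            rw [h, hF0, hF1]
            noncomm_ring
          have b1 : F 3 = x * F 1 + y * F 2 := by
            have h := hFrec 1
            norm_num at h
            have h0 := hFrec 0
            norm_num at h0
            rw [h, h0, hF0, hF1]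
            noncomm_ring
          constructor
          · rw [show (0:ℤ) + 2 = 2 by ring, show (0:ℤ) + 1 = 1 by ring,
              show (0:ℤ) = 0 by ring] at *
            exact b0
          · rw [show (0:ℤ) + 3 = 3 by ring, show (0:ℤ) + 2 = 2 by ring,
              show (0:ℤ) + 1 = 1 by ring]
            exact b1
      | succ k ih =>
          constructor
          · rw [show (k:ℤ) + 1 + 2 = k + 3 by ring, show (k:ℤ) + 1 + 1 = k + 2 by ring]
            exact ih.2
          · rw [show (k:ℤ) + 1 + 3 = k + 4 by ring, show (k:ℤ) + 1 + 2 = k + 3 by ring,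
              show (k:ℤ) + 1 + 1 = k + 2 by ring]
            exact stepF k ih.1 ih.2
      | pred k ih =>
          constructor
          · rw [show (-(k:ℤ) - 1) + 2 = -k + 1 by ring,
              show (-(k:ℤ) - 1) + 1 = -k by ring]
            have h1 := ih.1
            have h2 := ih.2
            rw [show (-(k:ℤ)) + 2 = -k + 2 by ring, show (-(k:ℤ)) + 1 = -k + 1 by ring] at h1
            rw [show (-(k:ℤ)) + 3 = -k + 3 by ring, show (-(k:ℤ)) + 2 = -k + 2 by ring,
              show (-(k:ℤ)) + 1 = -k + 1 by ring] at h2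
            have := stepB (-(k:ℤ) - 1)
            rw [show (-(k:ℤ) - 1) + 3 = -k + 2 by ring,
              show (-(k:ℤ) - 1) + 4 = -k + 3 by ring,
              show (-(k:ℤ) - 1) + 2 = -k + 1 by ring,
              show (-(k:ℤ) - 1) + 1 = -k by ring] at this
            exact this h1 h2
          · rw [show (-(k:ℤ) - 1) + 3 = -k + 2 by ring,
              show (-(k:ℤ) - 1) + 2 = -k + 1 by ring,
              show (-(k:ℤ) - 1) + 1 = -k by ring]
            have h1 := ih.1
            rw [show (-(k:ℤ)) + 2 = -k + 2 by ring, show (-(k:ℤ)) + 1 = -k + 1 by ring] at h1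
            rw [show (-(k:ℤ)) = -k + 0 by ring]
            rw [show (-(k:ℤ) + 0) = -k by ring]
            exact h1
    exact fun n => (pair n).1
  -- key step identity: C(m) = -C(m-1)
  have key : ∀ m : ℤ, G (m - 2) * xi * F m - G (m - 1) * F (m - 1)
      = -(G (m - 3) * xi * F (m - 1) - G (m - 2) * F (m - 2)) := by
    intro m
    have hFm : F m = x * F (m - 2) + y * F (m - 1) := by
      have := hL (m - 2)
      rwa [show m - 2 + 2 = m by ring, show m - 2 + 1 = m - 1 by ring] at this
    have hGm : G (m - 1) = G (m - 3) * xi + G (m - 2) * (xi * y) := by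
      have := hGrec (m - 3)
      rwa [show m - 3 + 2 = m - 1 by ring, show m - 3 + 1 = m - 2 by ring] at this
    rw [hFm, hGm]
    have e : G (m - 2) * xi * (x * F (m - 2)) = G (m - 2) * F (m - 2) := by
      rw [mul_assoc, ← mul_assoc xi x, hx', one_mul]
    calc G (m - 2) * xi * (x * F (m - 2) + y * F (m - 1))
          - (G (m - 3) * xi + G (m - 2) * (xi * y)) * F (m - 1)
        = G (m - 2) * xi * (x * F (m - 2)) + G (m - 2) * xi * (y * F (m - 1))
          - G (m - 3) * xi * F (m - 1) - G (m - 2) * (xi * (y * F (m - 1))) := by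
          noncomm_ring
      _ = G (m - 2) * F (m - 2) + G (m - 2) * xi * (y * F (m - 1))
          - G (m - 3) * xi * F (m - 1) - G (m - 2) * (xi * (y * F (m - 1))) := by rw [e]
      _ = -(G (m - 3) * xi * F (m - 1) - G (m - 2) * F (m - 2)) := by noncomm_ring
  -- main induction
  intro n
  induction n using Int.induction_on with
  | zero =>
      rw [show (0:ℤ) - 2 = -2 by ring, show (0:ℤ) - 1 = -1 by ring, hGm2, hGm1, hF0,
        zero_mul, sub_zero, mul_one, hx]
      norm_num
  | succ k ih =>
      have hk := key ((k:ℤ) + 1)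
      rw [show (k:ℤ) + 1 - 3 = k - 2 by ring, show (k:ℤ) + 1 - 1 = k by ring,
        show (k:ℤ) + 1 - 2 = k - 1 by ring] at hk
      rw [show (k:ℤ) + 1 - 2 = k - 1 by ring, show (k:ℤ) + 1 - 1 = k by ring] at *
      rw [hk, ← ih, hneg k]
  | pred k ih =>
      have hk := key (-(k:ℤ))
      rw [← ih] at hk
      have h3 := hneg (-(k:ℤ) - 1)
      rw [show -(k:ℤ) - 1 + 1 = -k by ring] at h3
      rw [h3] at hk
      have h4 := neg_injective hk
      rw [show -(k:ℤ) - 1 - 2 = -k - 3 by ring, show -(k:ℤ) - 1 - 1 = -k - 2 by ring,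
        show -(k:ℤ) - 3 = -k - 3 by ring] at *
      exact h4
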